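/- Let G be a countable tournament. Then there exists a countable linearly ordered set Q and pairwise disjoint induced subtournaments {G_i}_{i∈Q} with ⋃_{i∈Q} V(G_i) = V(G) such that G = ⊕_{i∈Q} G_i and each G_i is irreducible. Moreover, this decomposition is unique up to order isomorphism of Q: if G is also isomorphic to ⊕_{j∈Q'} G'_j with each G'_j irreducible, then any isomorphism between the two tournaments induces an order isomorphism f: Q → Q' such that G_i is isomorphic to G'_{f(i)} for every i ∈ Q. -/

import Mathlib

/-- `E` is the edge relation of a tournament: irreflexive, and between any two distinct
vertices exactly one direction is present. -/
def IsTournament {V : Type*} (E : V → V → Prop) : Prop :=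
  (∀ v : V, ¬ E v v) ∧ ∀ u v : V, u ≠ v → (E u v ↔ ¬ E v u)

/-- A tournament is irreducible if it is not the direct sum of two nonempty induced
subtournaments (all cross edges directed from the first to the second). -/
def TourIrreducible {V : Type*} (E : V → V → Prop) : Prop :=
  ¬ ∃ B : Set V, B.Nonempty ∧ Bᶜ.Nonempty ∧ ∀ v ∈ B, ∀ w ∈ Bᶜ, E v w

/-- `part : V → Q` exhibits the tournament `(V, E)` as the direct sum, over the linearly
ordered set `Q`, of the (nonempty) induced subtournaments on its fibres, each of which is
irreducible; all edges between distinct fibres point from the smaller index to the larger. -/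
def IsIrredDecomp {V Q : Type*} [LinearOrder Q] (E : V → V → Prop) (part : V → Q) : Prop :=
  Function.Surjective part ∧
  (∀ i : Q, TourIrreducible (fun v w : {x : V // part x = i} => E v.1 w.1)) ∧
  (∀ v w : V, part v < part w → E v w)

section Aux

variable {V : Type} (E : V → V → Prop)

/-- A cut: all edges go from `B` to its complement. -/
def IsCut (B : Set V) : Prop := ∀ v ∈ B, ∀ w ∈ Bᶜ, E v w

theorem cut_chain (hT : IsTournament E) {B C : Set V} (hB : IsCut E B) (hC : IsCut E C) :
    B ⊆ C ∨ C ⊆ B := by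
  by_contra h
  push_neg at h
  obtain ⟨h1, h2⟩ := h
  obtain ⟨x, hxB, hxC⟩ := Set.not_subset.mp h1
  obtain ⟨y, hyC, hyB⟩ := Set.not_subset.mp h2
  have hxy : x ≠ y := fun he => hxC (he ▸ hyC)
  have h1 : E x y := hB x hxB y hyB
  have h2 : E y x := hC y hyC x hxC
  exact ((hT.2 x y hxy).mp h1) h2

/-- Vertices equivalent iff no cut separates them. -/
def cutSetoid : Setoid V where
  r v w := ∀ B : Set V, IsCut E B → (v ∈ B ↔ w ∈ B)
  iseqv := ⟨fun _ _ _ => Iff.rfl, fun h B hB => (h B hB).symm,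
    fun h1 h2 B hB => (h1 B hB).trans (h2 B hB)⟩

def CQ : Type := Quotient (cutSetoid E)

def cutLT : CQ E → CQ E → Prop :=
  Quotient.lift₂ (fun v w => ∃ B : Set V, IsCut E B ∧ v ∈ B ∧ w ∉ B)
    (by
      rintro v w v' w' hv hw
      simp only [eq_iff_iff]
      constructor
      · rintro ⟨B, hB, h1, h2⟩
        exact ⟨B, hB, (hv B hB).mp h1, fun h => h2 ((hw B hB).mpr h)⟩
      · rintro ⟨B, hB, h1, h2⟩
        exact ⟨B, hB, (hv B hB).mpr h1, fun h => h2 ((hw B hB).mp h)⟩)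

theorem cutLT_mk {v w : V} :
    cutLT E (Quotient.mk (cutSetoid E) v) (Quotient.mk (cutSetoid E) w) ↔
      ∃ B : Set V, IsCut E B ∧ v ∈ B ∧ w ∉ B := Iff.rfl

theorem cutLT_sto (hT : IsTournament E) : IsStrictTotalOrder (CQ E) (cutLT E) := by
  have tri : ∀ a b : CQ E, cutLT E a b ∨ a = b ∨ cutLT E b a := by
    intro a b
    induction a using Quotient.ind
    induction b using Quotient.ind
    rename_i v w
    by_cases h1 : cutLT E ⟦v⟧ ⟦w⟧
    · exact Or.inl h1
    by_cases h2 : cutLT E ⟦w⟧ ⟦v⟧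
    · exact Or.inr (Or.inr h2)
    refine Or.inr (Or.inl (Quotient.sound ?_))
    intro B hB
    constructor
    · intro hv
      by_contra hw
      exact h1 ⟨B, hB, hv, hw⟩
    · intro hw
      by_contra hv
      exact h2 ⟨B, hB, hw, hv⟩
  have irr : ∀ a : CQ E, ¬ cutLT E a a := by
    intro a
    induction a using Quotient.ind
    rintro ⟨B, _, h1, h2⟩
    exact h2 h1
  have tr : ∀ a b c : CQ E, cutLT E a b → cutLT E b c → cutLT E a c := by
    intro a b c hab hbc
    induction a using Quotient.ind
    induction b using Quotient.ind
    induction c using Quotient.ind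
    obtain ⟨B, hB, hv, hw⟩ := hab
    obtain ⟨C, hC, hw', hx⟩ := hbc
    rcases cut_chain E hT hB hC with h | h
    · exact ⟨C, hC, h hv, hx⟩
    · exact absurd (h hw') hw
  have tri' : ∀ a b : CQ E, ¬ cutLT E a b → ¬ cutLT E b a → a = b := fun a b h1 h2 =>
    (tri a b).elim (fun h => absurd h h1) (fun h => h.elim id (fun h => absurd h h2))
  exact { trichotomous := tri', irrefl := irr, trans := tr }

end Aux

section Unique

variable {V' Q' : Type} [LinearOrder Q'] {E' : V' → V' → Prop} {part' : V' → Q'}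

/-- In any irreducible decomposition, a cut separates fibres monotonically. -/
theorem decomp_cut_lt (hT' : IsTournament E') (hD : IsIrredDecomp E' part')
    {B' : Set V'} (hB' : IsCut E' B') {a b : V'} (ha : a ∈ B') (hb : b ∉ B') :
    part' a < part' b := by
  rcases lt_trichotomy (part' a) (part' b) with h | h | h
  · exact h
  · exfalso
    apply hD.2.1 (part' a)
    refine ⟨{x | x.1 ∈ B'}, ⟨⟨a, rfl⟩, ha⟩, ⟨⟨b, h.symm⟩, hb⟩, ?_⟩
    intro x hx y hy
    exact hB' x.1 hx y.1 hy
  · exfalso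
    have hne : a ≠ b := fun he => absurd (he ▸ h) (lt_irrefl _)
    have h1 : E' a b := hB' a ha b hb
    have h2 : E' b a := hD.2.2 b a h
    exact ((hT'.2 a b hne).mp h1) h2

end Unique

/-- Every countable tournament decomposes as a direct sum of irreducible subtournaments
over a countable linearly ordered index set, uniquely up to order isomorphism: any
isomorphism with another such decomposed tournament induces an order isomorphism of the
index sets matching up the components. -/
theorem stmt2 {V : Type} [Countable V] (E : V → V → Prop) (hT : IsTournament E) :
    ∃ (Q : Type) (_ : LinearOrder Q) (part : V → Q),
      Countable Q ∧ IsIrredDecomp E part ∧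
      (∀ (V' : Type) (E' : V' → V' → Prop) (Q' : Type) (_ : LinearOrder Q')
          (part' : V' → Q'),
        IsTournament E' → IsIrredDecomp E' part' →
        ∀ g : V ≃ V', (∀ v w : V, E v w ↔ E' (g v) (g w)) →
        ∃ f : Q ≃o Q', ∀ v : V, part' (g v) = f (part v)) := by
  classical
  haveI hsto : IsStrictTotalOrder (CQ E) (cutLT E) := cutLT_sto E hT
  haveI hdec : DecidableRel (cutLT E) := fun _ _ => Classical.dec _
  letI LO : LinearOrder (CQ E) := linearOrderOfSTO (cutLT E)
  have hlt : ∀ a b : CQ E, a < b ↔ cutLT E a b := fun _ _ => Iff.rfl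
  set part : V → CQ E := Quotient.mk (cutSetoid E) with hpart
  have hsurj : Function.Surjective part := Quotient.mk_surjective
  -- edges respect the order
  have hedge : ∀ v w : V, part v < part w → E v w := by
    intro v w h
    rw [hlt] at h
    obtain ⟨B, hB, h1, h2⟩ := h
    exact hB v h1 w h2
  -- irreducibility of fibres
  have hirr : ∀ i : CQ E,
      TourIrreducible (fun v w : {x : V // part x = i} => E v.1 w.1) := by
    intro i
    rintro ⟨S, ⟨s, hs⟩, ⟨t, ht⟩, hSE⟩
    set B : Set V := {x | part x < i ∨ ∃ h : part x = i, (⟨x, h⟩ : {x : V // part x = i}) ∈ S}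
      with hBdef
    have hB : IsCut E B := by
      intro x hx y hy
      simp only [hBdef, Set.mem_setOf_eq, Set.mem_compl_iff] at hx hy
      push_neg at hy
      obtain ⟨hy1, hy2⟩ := hy
      rcases hx with hx | ⟨hxe, hxS⟩
      · -- part x < i ≤ part y
        have : part x < part y := by
          rcases lt_trichotomy (part y) i with h | h | h
          · exact absurd h (not_lt.mpr hy1)
          · exact h ▸ hx
          · exact lt_trans hx h
        exact hedge x y this
      · rcases lt_trichotomy (part y) i with h | h | h
        · exact absurd h (not_lt.mpr hy1)
        · -- same fibre: y ∉ S, use hSE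
          have hyS : (⟨y, h⟩ : {x : V // part x = i}) ∈ Sᶜ := hy2 h
          exact hSE ⟨x, hxe⟩ hxS ⟨y, h⟩ hyS
        · exact hedge x y (hxe ▸ h)
    -- s.1 and t.1 are in the same fibre but separated by B
    have hsB : s.1 ∈ B := Or.inr ⟨s.2, by simpa using hs⟩
    have htB : t.1 ∉ B := by
      rintro (h | ⟨h, hmem⟩)
      · rw [t.2] at h; exact lt_irrefl _ h
      · have : (⟨t.1, h⟩ : {x : V // part x = i}) = t := Subtype.ext rfl
        rw [this] at hmem
        exact ht hmem
    have heq : part s.1 = part t.1 := s.2.trans t.2.symm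
    have := (Quotient.exact heq) B hB
    exact htB (this.mp hsB)
  refine ⟨CQ E, LO, part, Quotient.countable, ⟨hsurj, hirr, hedge⟩, ?_⟩
  -- uniqueness
  intro V' E' Q' LO' part' hT' hD' g hg
  -- the induced map is well defined on the quotient
  have key_lt : ∀ v w : V, part v < part w → part' (g v) < part' (g w) := by
    intro v w h
    rw [hlt] at h
    obtain ⟨B, hB, h1, h2⟩ := h
    have hB' : IsCut E' (g '' B) := by
      rintro v' ⟨a, ha, rfl⟩ w' hw'
      have hw : g.symm w' ∉ B := by
        intro h
        exact hw' ⟨g.symm w', h, by simp⟩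
      have := hB a ha (g.symm w') hw
      have := (hg a (g.symm w')).mp this
      simpa using this
    exact decomp_cut_lt hT' hD' hB' ⟨v, h1, rfl⟩
      (fun ⟨a, ha, hae⟩ => h2 (g.injective hae ▸ ha))
  have key_eq : ∀ v w : V, part v = part w → part' (g v) = part' (g w) := by
    have aux : ∀ v w : V, part v = part w → ¬ part' (g v) < part' (g w) := by
      intro v w hvw hlt'
      set B' : Set V' := {x | part' x ≤ part' (g v)} with hB'def
      have hB' : IsCut E' B' := by
        intro x hx y hy
        simp only [hB'def, Set.mem_setOf_eq, Set.mem_compl_iff, not_le] at hx hy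
        exact hD'.2.2 x y (lt_of_le_of_lt hx hy)
      have hB : IsCut E (g ⁻¹' B') := by
        intro x hx y hy
        exact (hg x y).mpr (hB' (g x) hx (g y) hy)
      have := (Quotient.exact hvw) (g ⁻¹' B') hB
      have hvB : v ∈ g ⁻¹' B' := le_refl _
      have hwB : w ∈ g ⁻¹' B' := this.mp hvB
      exact absurd (hwB : part' (g w) ≤ part' (g v)) (not_le.mpr hlt')
    intro v w h
    rcases lt_trichotomy (part' (g v)) (part' (g w)) with hh | hh | hh
    · exact absurd hh (aux v w h)
    · exact hh
    · exact absurd hh (aux w v h.symm)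
  set φ : CQ E → Q' := Quotient.lift (fun v => part' (g v)) (fun v w h =>
    key_eq v w (Quotient.sound h)) with hφ
  have hmono : StrictMono φ := by
    intro a b hab
    induction a using Quotient.ind
    induction b using Quotient.ind
    rename_i v w
    exact key_lt v w hab
  have hφsurj : Function.Surjective φ := by
    intro q'
    obtain ⟨v', hv'⟩ := hD'.1 q'
    exact ⟨part (g.symm v'), by simp [hφ, hpart, hv']⟩
  refine ⟨hmono.orderIsoOfSurjective φ hφsurj, ?_⟩
  intro v
  rw [StrictMono.coe_orderIsoOfSurjective]
  rfl
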